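/- Let i < j be positive integers, let k = i²j²π⁴, and let β < −(i² + j²)π² (note that μ_i(k) = μ_j(k) = (i² + j²)π²). Then for every pair of reals a, b satisfying (1/2)(a²·i²π² + b²·j²π²) = −β − (i² + j²)π², the function u(x) = a·sin(iπx) + b·sin(jπx) is a solution of the stationary beam problem with f = 0. Consequently, the stationary problem has infinitely many solutions. -/

import Mathlib

set_option maxHeartbeats 1000000

open Real Set
open scoped ContDiff


/-- `μ_n(k) = k/(n²π²) + n²π²`. -/
noncomputable def mu (k : ℝ) (n : ℕ) : ℝ := k / ((n : ℝ)^2 * π^2) + (n : ℝ)^2 * π^2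

/-- `β_c(k) = min_{n ≥ 1} μ_n(k)`. -/
noncomputable def betaC (k : ℝ) : ℝ := sInf {x : ℝ | ∃ n : ℕ, 1 ≤ n ∧ x = mu k n}

/-- `u` is a solution of the stationary beam problem with `f = 0`:
`u ∈ C⁴([0,1])`, `u'''' - (β + ∫₀¹ u'(ξ)² dξ) u'' + k u = 0` on `[0,1]`,
with hinged boundary conditions. -/
def IsStatSol (k β : ℝ) (u : ℝ → ℝ) : Prop :=
  ContDiffOn ℝ 4 u (Icc (0:ℝ) 1) ∧
  (∀ x ∈ Icc (0:ℝ) 1,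
    iteratedDerivWithin 4 u (Icc (0:ℝ) 1) x
      - (β + ∫ ξ in (0:ℝ)..1, (iteratedDerivWithin 1 u (Icc (0:ℝ) 1) ξ)^2)
        * iteratedDerivWithin 2 u (Icc (0:ℝ) 1) x
      + k * u x = 0) ∧
  u 0 = 0 ∧ u 1 = 0 ∧
  iteratedDerivWithin 2 u (Icc (0:ℝ) 1) 0 = 0 ∧
  iteratedDerivWithin 2 u (Icc (0:ℝ) 1) 1 = 0


namespace BeamAux

/-- derivative of a sine combination -/
lemma hasDerivAt_sinComb (a p c d x : ℝ) :
    HasDerivAt (fun y => a * Real.sin (c*y) + p * Real.sin (d*y))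
      (a*c*Real.cos (c*x) + p*d*Real.cos (d*x)) x := by
  have h1 : HasDerivAt (fun y : ℝ => c*y) c x := by simpa using (hasDerivAt_id x).const_mul c
  have h2 : HasDerivAt (fun y : ℝ => d*y) d x := by simpa using (hasDerivAt_id x).const_mul d
  have hc := ((Real.hasDerivAt_sin (c*x)).comp x h1).const_mul a
  have hd := ((Real.hasDerivAt_sin (d*x)).comp x h2).const_mul p
  exact (hc.add hd).congr_deriv (by ring)

lemma hasDerivAt_cosComb (a p c d x : ℝ) :
    HasDerivAt (fun y => a * Real.cos (c*y) + p * Real.cos (d*y))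
      (-(a*c)*Real.sin (c*x) + -(p*d)*Real.sin (d*x)) x := by
  have h1 : HasDerivAt (fun y : ℝ => c*y) c x := by simpa using (hasDerivAt_id x).const_mul c
  have h2 : HasDerivAt (fun y : ℝ => d*y) d x := by simpa using (hasDerivAt_id x).const_mul d
  have hc := ((Real.hasDerivAt_cos (c*x)).comp x h1).const_mul a
  have hd := ((Real.hasDerivAt_cos (d*x)).comp x h2).const_mul p
  exact (hc.add hd).congr_deriv (by ring)

lemma deriv_sinComb (a p c d : ℝ) :
    deriv (fun y => a * Real.sin (c*y) + p * Real.sin (d*y))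
      = fun x => a*c*Real.cos (c*x) + p*d*Real.cos (d*x) :=
  funext fun x => (hasDerivAt_sinComb a p c d x).deriv

lemma deriv_cosComb (a p c d : ℝ) :
    deriv (fun y => a * Real.cos (c*y) + p * Real.cos (d*y))
      = fun x => -(a*c)*Real.sin (c*x) + -(p*d)*Real.sin (d*x) :=
  funext fun x => (hasDerivAt_cosComb a p c d x).deriv

lemma contDiff_sinComb (a p c d : ℝ) :
    ContDiff ℝ ∞ (fun y => a * Real.sin (c*y) + p * Real.sin (d*y)) := by
  have h1 : ContDiff ℝ ∞ (fun y : ℝ => Real.sin (c*y)) :=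
    Real.contDiff_sin.comp (contDiff_const.mul contDiff_id)
  have h2 : ContDiff ℝ ∞ (fun y : ℝ => Real.sin (d*y)) :=
    Real.contDiff_sin.comp (contDiff_const.mul contDiff_id)
  exact (contDiff_const.mul h1).add (contDiff_const.mul h2)

lemma iteratedDeriv_sinComb_two (a p c d : ℝ) :
    iteratedDeriv 2 (fun y => a * Real.sin (c*y) + p * Real.sin (d*y))
      = fun x => -(a*c*c)*Real.sin (c*x) + -(p*d*d)*Real.sin (d*x) := by
  rw [show (2:ℕ) = 1+1 from rfl, iteratedDeriv_succ, iteratedDeriv_one, deriv_sinComb,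
    deriv_cosComb]

lemma iteratedDeriv_sinComb_three (a p c d : ℝ) :
    iteratedDeriv 3 (fun y => a * Real.sin (c*y) + p * Real.sin (d*y))
      = fun x => -(a*c*c*c)*Real.cos (c*x) + -(p*d*d*d)*Real.cos (d*x) := by
  rw [show (3:ℕ) = 2+1 from rfl, iteratedDeriv_succ, iteratedDeriv_sinComb_two,
    deriv_sinComb]
  funext x; ring

lemma iteratedDeriv_sinComb_four (a p c d : ℝ) :
    iteratedDeriv 4 (fun y => a * Real.sin (c*y) + p * Real.sin (d*y))
      = fun x => (a*c*c*c*c)*Real.sin (c*x) + (p*d*d*d*d)*Real.sin (d*x) := by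
  rw [show (4:ℕ) = 3+1 from rfl, iteratedDeriv_succ, iteratedDeriv_sinComb_three,
    deriv_cosComb]
  funext x; ring

/-- iterated derivative within `Icc 0 1` agrees with global one for smooth functions -/
lemma iterWithin (f : ℝ → ℝ) (hf : ContDiff ℝ ∞ f) (n : ℕ) :
    ∀ x ∈ Icc (0:ℝ) 1, iteratedDerivWithin n f (Icc (0:ℝ) 1) x = iteratedDeriv n f x := by
  induction n with
  | zero => intro x hx; simp
  | succ n ih =>
    intro x hx
    have hud : UniqueDiffOn ℝ (Icc (0:ℝ) 1) := uniqueDiffOn_Icc zero_lt_one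
    rw [iteratedDerivWithin_succ]
    have hcongr : derivWithin (iteratedDerivWithin n f (Icc (0:ℝ) 1)) (Icc (0:ℝ) 1) x
        = derivWithin (iteratedDeriv n f) (Icc (0:ℝ) 1) x :=
      derivWithin_congr (fun y hy => ih y hy) (ih x hx)
    rw [hcongr]
    have hdn : DifferentiableAt ℝ (iteratedDeriv n f) x := by
      have : ContDiff ℝ ∞ (iteratedDeriv n f) := by
        rw [iteratedDeriv_eq_iterate]; exact hf.iterate_deriv n
      exact (this.differentiable (by simp)) x
    rw [hdn.derivWithin (hud x hx), ← iteratedDeriv_succ]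

lemma intC (r : ℝ) (h0 : r ≠ 0) (hs : Real.sin r = 0) :
    (∫ x in (0:ℝ)..1, Real.cos (r*x)) = 0 := by
  have key : ∀ x ∈ Set.uIcc (0:ℝ) 1,
      HasDerivAt (fun y => Real.sin (r*y)/r) (Real.cos (r*x)) x := by
    intro x _
    have h1 : HasDerivAt (fun y : ℝ => r*y) r x := by simpa using (hasDerivAt_id x).const_mul r
    have h2 := ((Real.hasDerivAt_sin (r*x)).comp x h1).div_const r
    simpa [mul_div_cancel_right₀ _ h0] using h2
  rw [intervalIntegral.integral_eq_sub_of_hasDerivAt key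
    ((Real.continuous_cos.comp (continuous_const.mul continuous_id)).intervalIntegrable 0 1)]
  simp [hs]

lemma integral_cosComb_sq (m n : ℕ) (hm : 1 ≤ m) (hmn : m < n) (A B : ℝ) :
    (∫ ξ in (0:ℝ)..1,
      (A*Real.cos ((m:ℝ)*π*ξ) + B*Real.cos ((n:ℝ)*π*ξ))^2) = A^2/2 + B^2/2 := by
  have key : ∀ ξ : ℝ, (A*Real.cos ((m:ℝ)*π*ξ) + B*Real.cos ((n:ℝ)*π*ξ))^2
      = (A^2/2 + B^2/2) + ((A^2/2)*Real.cos (2*(m:ℝ)*π*ξ)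
        + ((B^2/2)*Real.cos (2*(n:ℝ)*π*ξ)
        + ((A*B)*Real.cos (((m:ℝ)-(n:ℝ))*π*ξ) + (A*B)*Real.cos (((m:ℝ)+(n:ℝ))*π*ξ)))) := by
    intro ξ
    have e1 : 2*(m:ℝ)*π*ξ = 2*((m:ℝ)*π*ξ) := by ring
    have e2 : 2*(n:ℝ)*π*ξ = 2*((n:ℝ)*π*ξ) := by ring
    have e3 : ((m:ℝ)-(n:ℝ))*π*ξ = (m:ℝ)*π*ξ - (n:ℝ)*π*ξ := by ring
    have e4 : ((m:ℝ)+(n:ℝ))*π*ξ = (m:ℝ)*π*ξ + (n:ℝ)*π*ξ := by ring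
    rw [e1, e2, e3, e4, Real.cos_two_mul, Real.cos_two_mul, Real.cos_sub, Real.cos_add]
    ring
  simp only [key]
  have c1 : Continuous (fun ξ : ℝ => (A^2/2)*Real.cos (2*(m:ℝ)*π*ξ)) := by fun_prop
  have c2 : Continuous (fun ξ : ℝ => (B^2/2)*Real.cos (2*(n:ℝ)*π*ξ)) := by fun_prop
  have c3 : Continuous (fun ξ : ℝ => (A*B)*Real.cos (((m:ℝ)-(n:ℝ))*π*ξ)) := by fun_prop
  have c4 : Continuous (fun ξ : ℝ => (A*B)*Real.cos (((m:ℝ)+(n:ℝ))*π*ξ)) := by fun_prop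
  have i1 : IntervalIntegrable (fun ξ : ℝ => (A^2/2)*Real.cos (2*(m:ℝ)*π*ξ)) MeasureTheory.volume 0 1 := c1.intervalIntegrable (0:ℝ) 1
  have i2 : IntervalIntegrable (fun ξ : ℝ => (B^2/2)*Real.cos (2*(n:ℝ)*π*ξ)) MeasureTheory.volume 0 1 := c2.intervalIntegrable (0:ℝ) 1
  have i3 : IntervalIntegrable (fun ξ : ℝ => (A*B)*Real.cos (((m:ℝ)-(n:ℝ))*π*ξ)) MeasureTheory.volume 0 1 := c3.intervalIntegrable (0:ℝ) 1
  have i4 : IntervalIntegrable (fun ξ : ℝ => (A*B)*Real.cos (((m:ℝ)+(n:ℝ))*π*ξ)) MeasureTheory.volume 0 1 := c4.intervalIntegrable (0:ℝ) 1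
  have hm0 : (m:ℝ) ≠ 0 := Nat.cast_ne_zero.mpr (by omega)
  have hn0 : (n:ℝ) ≠ 0 := Nat.cast_ne_zero.mpr (by omega)
  have hmn' : (m:ℝ) ≠ (n:ℝ) := Nat.cast_injective.ne (by omega)
  have z1 : (∫ ξ in (0:ℝ)..1, (A^2/2)*Real.cos (2*(m:ℝ)*π*ξ)) = 0 := by
    rw [intervalIntegral.integral_const_mul, intC (2*(m:ℝ)*π)
      (by exact mul_ne_zero (mul_ne_zero two_ne_zero hm0) Real.pi_ne_zero)
      (by have h := Real.sin_int_mul_pi (2*(m:ℤ)); push_cast at h; linarith), mul_zero]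
  have z2 : (∫ ξ in (0:ℝ)..1, (B^2/2)*Real.cos (2*(n:ℝ)*π*ξ)) = 0 := by
    rw [intervalIntegral.integral_const_mul, intC (2*(n:ℝ)*π)
      (by exact mul_ne_zero (mul_ne_zero two_ne_zero hn0) Real.pi_ne_zero)
      (by have h := Real.sin_int_mul_pi (2*(n:ℤ)); push_cast at h; linarith), mul_zero]
  have z3 : (∫ ξ in (0:ℝ)..1, (A*B)*Real.cos (((m:ℝ)-(n:ℝ))*π*ξ)) = 0 := by
    rw [intervalIntegral.integral_const_mul, intC (((m:ℝ)-(n:ℝ))*π)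
      (mul_ne_zero (sub_ne_zero.mpr hmn') Real.pi_ne_zero)
      (by have h := Real.sin_int_mul_pi ((m:ℤ)-(n:ℤ)); push_cast at h; linarith), mul_zero]
  have z4 : (∫ ξ in (0:ℝ)..1, (A*B)*Real.cos (((m:ℝ)+(n:ℝ))*π*ξ)) = 0 := by
    rw [intervalIntegral.integral_const_mul, intC (((m:ℝ)+(n:ℝ))*π)
      (by positivity)
      (by have h := Real.sin_int_mul_pi ((m:ℤ)+(n:ℤ)); push_cast at h; linarith), mul_zero]
  rw [intervalIntegral.integral_add intervalIntegrable_const (i1.add (i2.add (i3.add i4))),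
    intervalIntegral.integral_add i1 (i2.add (i3.add i4)),
    intervalIntegral.integral_add i2 (i3.add i4),
    intervalIntegral.integral_add i3 i4, z1, z2, z3, z4]
  simp


lemma comb_inj (c d a p a' p' : ℝ) (hc : 0 < c) (hcd : c < d)
    (h : (fun x => a * Real.sin (c*x) + p * Real.sin (d*x))
       = (fun x => a' * Real.sin (c*x) + p' * Real.sin (d*x))) : a = a' := by
  have e1 := congrArg (fun f : ℝ → ℝ => deriv f 0) h
  simp only [deriv_sinComb, mul_zero, Real.cos_zero, mul_one] at e1
  have e3 := congrArg (fun f : ℝ → ℝ => iteratedDeriv 3 f 0) h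
  simp only [iteratedDeriv_sinComb_three, mul_zero, Real.cos_zero, mul_one] at e3
  have key : (a - a') * (c*(d^2 - c^2)) = 0 := by linear_combination d^2 * e1 + e3
  have hpos : 0 < c*(d^2 - c^2) := mul_pos hc (by nlinarith)
  rcases mul_eq_zero.mp key with h1 | h1
  · linarith [sub_eq_zero.mp h1]
  · exact absurd h1 (ne_of_gt hpos)

end BeamAux

open BeamAux in
lemma isStatSol_comb (i j : ℕ) (hi : 1 ≤ i) (hij : i < j) (β a b : ℝ)
    (hab : (1/2) * (a^2 * (i : ℝ)^2 * π^2 + b^2 * (j : ℝ)^2 * π^2)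
        = -β - ((i : ℝ)^2 + (j : ℝ)^2) * π^2) :
    IsStatSol ((i : ℝ)^2 * (j : ℝ)^2 * π^4) β
      (fun x => a * Real.sin ((i : ℝ)*π*x) + b * Real.sin ((j : ℝ)*π*x)) := by
  have hC : ContDiff ℝ ∞ (fun x => a * Real.sin ((i : ℝ)*π*x) + b * Real.sin ((j : ℝ)*π*x)) :=
    contDiff_sinComb a b ((i:ℝ)*π) ((j:ℝ)*π)
  have h01 : (0:ℝ) ∈ Icc (0:ℝ) 1 := Set.mem_Icc.mpr ⟨le_refl 0, zero_le_one⟩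
  have h11 : (1:ℝ) ∈ Icc (0:ℝ) 1 := Set.mem_Icc.mpr ⟨zero_le_one, le_refl 1⟩
  have hint : (∫ ξ in (0:ℝ)..1, (iteratedDerivWithin 1
        (fun x => a * Real.sin ((i : ℝ)*π*x) + b * Real.sin ((j : ℝ)*π*x))
        (Icc (0:ℝ) 1) ξ)^2)
      = -β - ((i : ℝ)^2 + (j : ℝ)^2) * π^2 := by
    have step1 : (∫ ξ in (0:ℝ)..1, (iteratedDerivWithin 1
          (fun x => a * Real.sin ((i : ℝ)*π*x) + b * Real.sin ((j : ℝ)*π*x))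
          (Icc (0:ℝ) 1) ξ)^2)
        = ∫ ξ in (0:ℝ)..1,
            ((a*((i:ℝ)*π))*Real.cos ((i:ℝ)*π*ξ) + (b*((j:ℝ)*π))*Real.cos ((j:ℝ)*π*ξ))^2 := by
      apply intervalIntegral.integral_congr
      intro ξ hξ
      rw [Set.uIcc_of_le (zero_le_one : (0:ℝ) ≤ 1)] at hξ
      simp only [iterWithin _ hC 1 ξ hξ, iteratedDeriv_one, deriv_sinComb]
    rw [step1, integral_cosComb_sq i j hi hij]
    linear_combination hab
  refine ⟨(hC.of_le (by norm_cast)).contDiffOn, ?_, ?_, ?_, ?_, ?_⟩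
  · intro x hx
    rw [iterWithin _ hC 4 x hx, iterWithin _ hC 2 x hx, hint]
    simp only [iteratedDeriv_sinComb_four, iteratedDeriv_sinComb_two]
    ring
  · simp
  · simp [Real.sin_nat_mul_pi]
  · rw [iterWithin _ hC 2 0 h01]
    simp only [iteratedDeriv_sinComb_two]
    simp
  · rw [iterWithin _ hC 2 1 h11]
    simp only [iteratedDeriv_sinComb_two]
    simp [Real.sin_nat_mul_pi]

/-- At a resonant value `k = i²j²π⁴` with `β < -(i²+j²)π²`, every function
`a sin(iπx) + b sin(jπx)` with `(1/2)(a²i²π² + b²j²π²) = -β - (i²+j²)π²` is a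
stationary solution; hence there are infinitely many solutions. -/
theorem stmt3 (i j : ℕ) (hi : 1 ≤ i) (hij : i < j) (β : ℝ)
    (hβ : β < -(((i : ℝ)^2 + (j : ℝ)^2) * π^2)) :
    (∀ a b : ℝ,
      (1/2) * (a^2 * (i : ℝ)^2 * π^2 + b^2 * (j : ℝ)^2 * π^2)
          = -β - ((i : ℝ)^2 + (j : ℝ)^2) * π^2 →
      IsStatSol ((i : ℝ)^2 * (j : ℝ)^2 * π^4) β
        (fun x => a * Real.sin ((i : ℝ)*π*x) + b * Real.sin ((j : ℝ)*π*x))) ∧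
    {u : ℝ → ℝ | IsStatSol ((i : ℝ)^2 * (j : ℝ)^2 * π^4) β u}.Infinite := by
  constructor
  · intro a b hab
    exact isStatSol_comb i j hi hij β a b hab
  · have hπ := Real.pi_pos
    have hi0 : (0:ℝ) < (i:ℝ) := by exact_mod_cast Nat.lt_of_lt_of_le Nat.zero_lt_one hi
    have hj0 : (0:ℝ) < (j:ℝ) := by exact_mod_cast lt_of_le_of_lt (Nat.zero_le i) hij
    have hijR : (i:ℝ) < (j:ℝ) := by exact_mod_cast hij
    set R : ℝ := -β - ((i : ℝ)^2 + (j : ℝ)^2) * π^2 with hR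
    have hR0 : 0 < R := by rw [hR]; linarith
    set M : ℝ := Real.sqrt (2*R/((i:ℝ)^2*π^2)) with hM
    have hM0 : 0 < M := Real.sqrt_pos.mpr (by positivity)
    set F : ℝ → (ℝ → ℝ) := fun a => (fun x => a * Real.sin ((i : ℝ)*π*x)
      + (Real.sqrt ((2*R - a^2*(i:ℝ)^2*π^2)/((j:ℝ)^2*π^2))) * Real.sin ((j : ℝ)*π*x)) with hF
    have hq : ∀ a ∈ Icc (0:ℝ) M, 0 ≤ 2*R - a^2*(i:ℝ)^2*π^2 := by
      intro a ha
      have h1 : a^2 ≤ M^2 := by nlinarith [ha.1, ha.2]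
      have hM2 : M^2 = 2*R/((i:ℝ)^2*π^2) := by
        rw [hM]; exact Real.sq_sqrt (by positivity)
      rw [hM2] at h1
      have h2 : a^2 * ((i:ℝ)^2*π^2) ≤ 2*R := (le_div_iff₀ (by positivity)).mp h1
      linarith
    have hmap : ∀ a ∈ Icc (0:ℝ) M,
        F a ∈ {u : ℝ → ℝ | IsStatSol ((i : ℝ)^2 * (j : ℝ)^2 * π^4) β u} := by
      intro a ha
      simp only [hF, Set.mem_setOf_eq]
      apply isStatSol_comb i j hi hij β
      have hsq : (Real.sqrt ((2*R - a^2*(i:ℝ)^2*π^2)/((j:ℝ)^2*π^2)))^2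
          = (2*R - a^2*(i:ℝ)^2*π^2)/((j:ℝ)^2*π^2) := Real.sq_sqrt (div_nonneg (hq a ha) (by positivity))
      rw [hsq]
      have hj2 : ((j:ℝ)^2*π^2) ≠ 0 := by positivity
      have hdm : (2*R - a^2*(i:ℝ)^2*π^2)/((j:ℝ)^2*π^2) * ((j:ℝ)^2*π^2)
          = 2*R - a^2*(i:ℝ)^2*π^2 := div_mul_cancel₀ _ hj2
      linear_combination (1/2) * hdm + hR
    have hinj : Set.InjOn F (Icc (0:ℝ) M) := by
      intro a ha a' ha' heq
      simp only [hF] at heq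
      exact BeamAux.comb_inj ((i:ℝ)*π) ((j:ℝ)*π) a _ a' _ (by positivity)
        (by nlinarith) heq
    exact ((Set.Icc_infinite hM0).image hinj).mono (Set.image_subset_iff.mpr hmap)
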